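/- Let a : ℕ → ℂ be a sequence (indexed by n ≥ 1) such that for every σ > 1 the series ∑_{n=1}^∞ |a_n| n^{-σ} converges, and suppose H : ℂ → ℂ is entire, satisfies H(s) = (s−1) ∑_{n=1}^∞ a_n n^{-s} for Re(s) > 1, is of finite order (there exist A, C > 0 with ‖H(s)‖ ≤ C·exp(‖s‖^A) for all s), and satisfies the functional equation: for all s with 0 < Re(s) < 1, π^{-s/2} Γ(s/2) · H(s)/(s−1) = π^{-(1-s)/2} Γ((1−s)/2) · H(1−s)/(−s). Then for all real a' ≤ b' there exists C' > 0 such that ‖π^{-s/2} Γ(s/2) · H(s)/(s−1)‖ ≤ C' for every s with a' ≤ Re(s) ≤ b' and |Im(s)| ≥ 1. -/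

import Mathlib

set_option maxHeartbeats 1000000

open Complex Set Filter Asymptotics

open Complex Set Filter Asymptotics

lemma aux_norm_Gamma {z : ℂ} (hz : 0 < z.re) : ‖Complex.Gamma z‖ ≤ Real.Gamma z.re := by
  rw [Complex.Gamma_eq_integral hz, Real.Gamma_eq_integral hz, Complex.GammaIntegral]
  refine (MeasureTheory.norm_integral_le_integral_norm _).trans (le_of_eq ?_)
  refine MeasureTheory.setIntegral_congr_fun measurableSet_Ioi fun x hx => ?_
  rw [norm_mul, Complex.norm_real, Real.norm_eq_abs,
    _root_.abs_of_nonneg (Real.exp_pos _).le, Complex.norm_cpow_eq_rpow_re_of_pos hx]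
  simp

lemma aux_Gamma_strip (x₁ x₂ : ℝ) (h : 0 < x₁) :
    ∃ K > 0, ∀ z : ℂ, x₁ ≤ z.re → z.re ≤ x₂ → ‖Complex.Gamma z‖ ≤ K := by
  have hc : ContinuousOn Real.Gamma (Set.Icc x₁ x₂) := by
    intro x hx
    exact ((Real.differentiableAt_Gamma (fun m => by
      have := hx.1; have := Nat.cast_nonneg (α := ℝ) m; intro hxm; linarith [neg_nonpos.mpr this])).continuousAt).continuousWithinAt
  obtain ⟨K, hK⟩ := (isCompact_Icc (a := x₁) (b := x₂)).exists_bound_of_continuousOn hc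
  refine ⟨max K 1, lt_of_lt_of_le one_pos (le_max_right _ _), fun z h1 h2 => ?_⟩
  refine (aux_norm_Gamma (lt_of_lt_of_le h h1)).trans ?_
  calc Real.Gamma z.re ≤ ‖Real.Gamma z.re‖ := le_abs_self _
    _ ≤ K := hK _ ⟨h1, h2⟩
    _ ≤ max K 1 := le_max_left _ _

lemma aux_poly_exp (A : ℝ) (hA : 0 < A) :
    ∃ B > 0, ∀ t : ℝ, 0 ≤ t → (2 + t) ^ A ≤ B * Real.exp t := by
  set n : ℕ := ⌈A⌉₊ with hn
  refine ⟨3 ^ n * (n.factorial : ℝ), by positivity, fun t ht => ?_⟩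
  have h1 : (2 + t) ^ A ≤ (2 + t) ^ (n : ℝ) :=
    Real.rpow_le_rpow_of_exponent_le (by linarith) (Nat.le_ceil A)
  rw [Real.rpow_natCast] at h1
  refine h1.trans ?_
  have h2 : (2 + t) ≤ 3 * max 1 t := by
    rcases le_total t 1 with h | h
    · simp [max_eq_left h]; linarith
    · rw [max_eq_right h]; linarith
  calc (2 + t) ^ n ≤ (3 * max 1 t) ^ n := by
        exact pow_le_pow_left₀ (by linarith) h2 n
    _ = 3 ^ n * (max 1 t) ^ n := mul_pow _ _ _
    _ ≤ 3 ^ n * ((n.factorial : ℝ) * Real.exp t) := by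
        refine mul_le_mul_of_nonneg_left ?_ (by positivity)
        rcases le_total t 1 with h | h
        · rw [max_eq_left h, one_pow]
          have := Real.exp_pos t
          nlinarith [Real.add_one_le_exp t, Nat.one_le_iff_ne_zero.mpr (Nat.factorial_ne_zero n),
            (Nat.one_le_cast (α := ℝ)).mpr n.factorial_pos]
        · rw [max_eq_right h]
          have h3 := Real.pow_div_factorial_le_exp t ht n
          rw [div_le_iff₀ (by positivity)] at h3
          linarith [h3]
    _ = 3 ^ n * (n.factorial : ℝ) * Real.exp t := by ring


private lemma aux_dirichlet (a : ℕ → ℂ) (hsum2 : Summable fun n : ℕ => ‖a (n + 1)‖ * ((n : ℝ) + 1) ^ (-(2:ℝ))) :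
    ∀ s : ℂ, 2 ≤ s.re →
    ‖∑' n : ℕ, a (n + 1) * ((n : ℂ) + 1) ^ (-s)‖ ≤
      ∑' n : ℕ, ‖a (n + 1)‖ * ((n : ℝ) + 1) ^ (-(2:ℝ)) := by
  intro s hs
  have hterm : ∀ n : ℕ, ‖a (n + 1) * ((n : ℂ) + 1) ^ (-s)‖ ≤
      ‖a (n + 1)‖ * ((n : ℝ) + 1) ^ (-(2:ℝ)) := by
    intro n
    rw [norm_mul]
    refine mul_le_mul_of_nonneg_left ?_ (norm_nonneg _)
    have hpos : (0:ℝ) < (n:ℝ) + 1 := by positivity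
    have hcast : ((n : ℂ) + 1) = (((n:ℝ) + 1 : ℝ) : ℂ) := by push_cast; ring
    rw [hcast, Complex.norm_cpow_eq_rpow_re_of_pos hpos]
    refine Real.rpow_le_rpow_of_exponent_le (by linarith) ?_
    simp only [Complex.neg_re]; linarith
  have hsummable : Summable fun n : ℕ => ‖a (n + 1) * ((n : ℂ) + 1) ^ (-s)‖ :=
    Summable.of_nonneg_of_le (fun n => norm_nonneg _) hterm hsum2
  exact (norm_tsum_le_tsum_norm hsummable).trans (Summable.tsum_le_tsum hterm hsummable hsum2)

private lemma aux_right (H D : ℂ → ℂ) (M K₀ : ℝ) (hM0 : 0 ≤ M) (hK₀pos : 0 < K₀) (b₂ : ℝ)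
    (hHeq : ∀ s : ℂ, 1 < s.re → H s = (s - 1) * D s)
    (hDb : ∀ s : ℂ, 2 ≤ s.re → ‖D s‖ ≤ M)
    (hpinorm : ∀ w : ℂ, ‖(Real.pi : ℂ) ^ w‖ = Real.pi ^ w.re)
    (hK₀ : ∀ z : ℂ, 1 ≤ z.re → z.re ≤ b₂ / 2 → ‖Complex.Gamma z‖ ≤ K₀) :
    ∀ s : ℂ, 2 ≤ s.re → s.re ≤ b₂ →
      ‖(Real.pi : ℂ) ^ (-s / 2) * Complex.Gamma (s / 2) * H s / (s - 1)‖ ≤ K₀ * M := by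
  intro s h2 hb
  have hs1 : s - 1 ≠ 0 := by
    intro h
    have := congrArg Complex.re h
    simp only [Complex.sub_re, Complex.one_re, Complex.zero_re] at this
    linarith
  have hkey : (Real.pi : ℂ) ^ (-s / 2) * Complex.Gamma (s / 2) * H s / (s - 1) =
      (Real.pi : ℂ) ^ (-s / 2) * Complex.Gamma (s / 2) * D s := by
    rw [hHeq s (by linarith)]; field_simp
  rw [hkey]
  have h1 : ‖(Real.pi : ℂ) ^ (-s / 2)‖ ≤ 1 := by
    rw [hpinorm]
    refine Real.rpow_le_one_of_one_le_of_nonpos (by linarith [Real.pi_gt_three]) ?_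
    have : (-s / 2 : ℂ).re = -s.re / 2 := by
      simp [Complex.div_re, Complex.neg_re]
    rw [this]; linarith
  have h2' : ‖Complex.Gamma (s / 2)‖ ≤ K₀ := by
    refine hK₀ _ ?_ ?_ <;>
      · have : (s / 2 : ℂ).re = s.re / 2 := by simp [Complex.div_re]
        rw [this]; linarith
  have h3 : ‖D s‖ ≤ M := hDb s h2
  calc ‖(Real.pi : ℂ) ^ (-s / 2) * Complex.Gamma (s / 2) * D s‖
      = ‖(Real.pi : ℂ) ^ (-s / 2)‖ * ‖Complex.Gamma (s / 2)‖ * ‖D s‖ := by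
        rw [norm_mul, norm_mul]
    _ ≤ 1 * K₀ * M :=
        mul_le_mul (mul_le_mul h1 h2' (norm_nonneg _) zero_le_one) h3 (norm_nonneg _)
          (by positivity)
    _ = K₀ * M := by ring

private lemma aux_fe (H : ℂ → ℂ) (hH : Differentiable ℂ H)
    (hFE : ∀ s : ℂ, 0 < s.re → s.re < 1 →
      (Real.pi : ℂ) ^ (-s / 2) * Complex.Gamma (s / 2) * H s / (s - 1) =
        (Real.pi : ℂ) ^ (-(1 - s) / 2) * Complex.Gamma ((1 - s) / 2) * H (1 - s) / (-s)) :
    ∀ s : ℂ, s.im ≠ 0 ∨ s = -1 →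
      (Real.pi : ℂ) ^ (-s / 2) * Complex.Gamma (s / 2) * H s / (s - 1) =
        (Real.pi : ℂ) ^ (-(1 - s) / 2) * Complex.Gamma ((1 - s) / 2) * H (1 - s) / (-s) := by
  set G : ℂ → ℂ := fun s =>
    (Real.pi : ℂ) ^ (-s / 2) * Complex.Gamma (s / 2) * H s / (s - 1) with hGdef
  set R : ℂ → ℂ := fun s =>
    (Real.pi : ℂ) ^ (-(1 - s) / 2) * Complex.Gamma ((1 - s) / 2) * H (1 - s) / (-s) with hRdef
  have hpi : (Real.pi : ℂ) ≠ 0 := by exact_mod_cast Real.pi_ne_zero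
  -- differentiability of G
  have hGdiff : ∀ s : ℂ, s ≠ 1 → (∀ m : ℕ, s ≠ -(2 * m)) → DifferentiableAt ℂ G s := by
    intro s h1 h2
    refine DifferentiableAt.div (DifferentiableAt.mul (DifferentiableAt.mul ?_ ?_) (hH s))
      ((differentiableAt_id.sub_const 1)) (sub_ne_zero.mpr h1)
    · exact (differentiableAt_id.neg.div_const 2).const_cpow (Or.inl hpi)
    · refine (Complex.differentiableAt_Gamma _ fun m hm => ?_).comp s
        (differentiableAt_id.div_const 2)
      apply h2 m
      have : s = 2 * (s / 2) := by ring
      rw [this, hm]; ring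
  have hRdiff : ∀ s : ℂ, s ≠ 0 → (∀ m : ℕ, s ≠ 1 + 2 * m) → DifferentiableAt ℂ R s := by
    intro s h1 h2
    refine DifferentiableAt.div (DifferentiableAt.mul (DifferentiableAt.mul ?_ ?_)
      ((hH (1 - s)).comp s ((differentiableAt_const 1).sub differentiableAt_id)))
      (differentiableAt_id.neg) (neg_ne_zero.mpr h1)
    · exact (((differentiableAt_const (1:ℂ)).sub differentiableAt_id).neg.div_const 2).const_cpow
        (Or.inl hpi)
    · refine (Complex.differentiableAt_Gamma _ fun m hm => ?_).comp s
        (((differentiableAt_const (1:ℂ)).sub differentiableAt_id).div_const 2)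
      apply h2 m
      have : s = 1 - 2 * ((1 - s) / 2) := by ring
      rw [this, hm]; ring
  -- identity theorem helper
  have hkey : ∀ U : Set ℂ, IsOpen U → IsPreconnected U →
      (∀ s ∈ U, DifferentiableAt ℂ G s) → (∀ s ∈ U, DifferentiableAt ℂ R s) →
      ∀ z₀ ∈ U, G =ᶠ[nhds z₀] R → EqOn G R U := by
    intro U hUo hUc hGd hRd z₀ hz₀ hev
    exact (DifferentiableOn.analyticOnNhd
        (fun s hs => (hGd s hs).differentiableWithinAt) hUo).eqOn_of_preconnected_of_eventuallyEq
      (DifferentiableOn.analyticOnNhd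
        (fun s hs => (hRd s hs).differentiableWithinAt) hUo) hUc hz₀ hev
  -- base equality on critical strip
  have hVopen : IsOpen {s : ℂ | 0 < s.re ∧ s.re < 1} :=
    (isOpen_lt continuous_const Complex.continuous_re).and
      (isOpen_lt Complex.continuous_re continuous_const)
  have hbase : EqOn G R {s : ℂ | 0 < s.re ∧ s.re < 1} := fun s hs => hFE s hs.1 hs.2
  -- upper half plane
  have hUopen : IsOpen {s : ℂ | 0 < s.im} := isOpen_lt continuous_const Complex.continuous_im
  have hUup : EqOn G R {s : ℂ | 0 < s.im} := by
    refine hkey _ hUopen (convex_halfSpace_im_gt 0).isPreconnected ?_ ?_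
      (⟨1/2, 1⟩ : ℂ) (by norm_num [Set.mem_setOf_eq]) ?_
    · intro s hs
      refine hGdiff s (fun h => ?_) (fun m h => ?_) <;>
        · rw [h] at hs; simp [Set.mem_setOf_eq] at hs
    · intro s hs
      refine hRdiff s (fun h => ?_) (fun m h => ?_) <;>
        · rw [h] at hs; simp [Set.mem_setOf_eq] at hs
    · exact Filter.eventuallyEq_of_mem (hVopen.mem_nhds (by norm_num [Set.mem_setOf_eq])) hbase
  -- lower half plane
  have hLopen : IsOpen {s : ℂ | s.im < 0} := isOpen_lt Complex.continuous_im continuous_const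
  have hUdown : EqOn G R {s : ℂ | s.im < 0} := by
    refine hkey _ hLopen (convex_halfSpace_im_lt 0).isPreconnected ?_ ?_
      (⟨1/2, -1⟩ : ℂ) (by norm_num [Set.mem_setOf_eq]) ?_
    · intro s hs
      refine hGdiff s (fun h => ?_) (fun m h => ?_) <;>
        · rw [h] at hs; simp [Set.mem_setOf_eq] at hs
    · intro s hs
      refine hRdiff s (fun h => ?_) (fun m h => ?_) <;>
        · rw [h] at hs; simp [Set.mem_setOf_eq] at hs
    · exact Filter.eventuallyEq_of_mem (hVopen.mem_nhds (by norm_num [Set.mem_setOf_eq])) hbase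
  -- ball around -1
  have hBall : EqOn G R (Metric.ball (-1 : ℂ) (1/2)) := by
    have hball : ∀ s : ℂ, s ∈ Metric.ball (-1 : ℂ) (1/2) → ∀ w : ℂ, 1 ≤ dist w (-1 : ℂ) → s ≠ w := by
      intro s hs w hw h
      rw [h] at hs
      rw [Metric.mem_ball] at hs
      linarith
    refine hkey _ Metric.isOpen_ball (convex_ball _ _).isPreconnected ?_ ?_
      (⟨-1, 1/4⟩ : ℂ) ?_ ?_
    · intro s hs
      refine hGdiff s (hball s hs 1 (by rw [Complex.dist_eq]; norm_num)) ?_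
      intro m
      refine hball s hs _ ?_
      have he : (-(2*(m:ℂ)) - (-1)) = (((1:ℝ) - 2*m : ℝ) : ℂ) := by push_cast; ring
      rw [Complex.dist_eq, he, Complex.norm_real, Real.norm_eq_abs]
      rcases m with _ | k
      · norm_num
      · push_cast
        rw [abs_of_nonpos (by push_cast; linarith [Nat.cast_nonneg (α := ℝ) k])]
        push_cast; linarith [Nat.cast_nonneg (α := ℝ) k]
    · intro s hs
      refine hRdiff s (hball s hs 0 (by rw [Complex.dist_eq]; norm_num)) ?_
      intro m
      refine hball s hs _ ?_
      have he : ((1:ℂ) + 2*(m:ℂ) - (-1)) = (((2:ℝ) + 2*m : ℝ) : ℂ) := by push_cast; ring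
      rw [Complex.dist_eq, he, Complex.norm_real, Real.norm_eq_abs,
        _root_.abs_of_nonneg (by positivity)]
      linarith [Nat.cast_nonneg (α := ℝ) m]
    · rw [Metric.mem_ball, Complex.dist_eq_re_im]
      norm_num
    · refine Filter.eventuallyEq_of_mem (hUopen.mem_nhds ?_) hUup
      norm_num [Set.mem_setOf_eq]
  intro s hs
  rcases hs with him | hm1
  · rcases lt_or_gt_of_ne him with h | h
    · exact hUdown (Set.mem_setOf.mpr h)
    · exact hUup (Set.mem_setOf.mpr h)
  · exact hBall (by rw [hm1]; exact Metric.mem_ball_self (by norm_num))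

private lemma aux_mid (H D : ℂ → ℂ) (hH : Differentiable ℂ H) (M : ℝ) (hM0 : 0 ≤ M)
    (A C : ℝ) (hA : 0 < A) (hC : 0 < C)
    (hHbd : ∀ s : ℂ, ‖H s‖ ≤ C * Real.exp (‖s‖ ^ A))
    (hHeq : ∀ s : ℂ, 1 < s.re → H s = (s - 1) * D s)
    (hDb : ∀ s : ℂ, 2 ≤ s.re → ‖D s‖ ≤ M)
    (hpinorm : ∀ w : ℂ, ‖(Real.pi : ℂ) ^ w‖ = Real.pi ^ w.re)
    (hEq : ∀ s : ℂ, s.im ≠ 0 ∨ s = -1 →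
      (Real.pi : ℂ) ^ (-s / 2) * Complex.Gamma (s / 2) * H s / (s - 1) =
        (Real.pi : ℂ) ^ (-(1 - s) / 2) * Complex.Gamma ((1 - s) / 2) * H (1 - s) / (-s)) :
    ∀ s : ℂ, -1 ≤ s.re → s.re ≤ 2 → 1 ≤ |s.im| →
      ‖(Real.pi : ℂ) ^ (-s / 2) * Complex.Gamma (s / 2) * H s / (s - 1)‖ ≤
        144 * (3 * M + 1) := by
  obtain ⟨K₁, hK₁pos, hK₁⟩ := aux_Gamma_strip (1/2) 2 (by norm_num)
  obtain ⟨B, hBpos, hB⟩ := aux_poly_exp A hA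
  have hpi1 : (1:ℝ) ≤ Real.pi := by linarith [Real.pi_gt_three]
  have hrehalf : ∀ z : ℂ, (z / 2).re = z.re / 2 := fun z => by simp [Complex.div_re]
  have hreneg : ∀ z : ℂ, (-z / 2).re = -z.re / 2 := fun z => by simp [Complex.div_re]
  set g : ℂ → ℂ := fun s =>
    (Real.pi : ℂ) ^ (-s / 2) * Complex.Gamma (s / 2 + 1) * H s / ((s + 5) ^ 2) with hgdef
  -- differentiability
  have hgd : ∀ z : ℂ, -1 ≤ z.re → DifferentiableAt ℂ g z := by
    intro z hz
    have h5 : z + 5 ≠ 0 := fun h => by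
      have := congrArg Complex.re h
      simp only [Complex.add_re, Complex.zero_re] at this
      norm_num at this; linarith
    refine DifferentiableAt.div (DifferentiableAt.mul (DifferentiableAt.mul ?_ ?_) (hH z))
      ((differentiableAt_id.add_const 5).pow 2) (pow_ne_zero 2 h5)
    · exact (differentiableAt_id.neg.div_const 2).const_cpow
        (Or.inl (by exact_mod_cast Real.pi_ne_zero))
    · refine (Complex.differentiableAt_Gamma _ fun m hm => ?_).comp z
        ((differentiableAt_id.div_const 2).add_const 1)
      have := congrArg Complex.re hm
      simp only [Complex.add_re, Complex.one_re, Complex.neg_re, Complex.natCast_re] at this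
      rw [hrehalf] at this
      have hm0 := Nat.cast_nonneg (α := ℝ) m
      linarith
  have hfd : DiffContOnCl ℂ g (Complex.re ⁻¹' Ioo (-1 : ℝ) 2) := by
    have hsub : closure (Complex.re ⁻¹' Ioo (-1 : ℝ) 2) ⊆ {z : ℂ | -1 ≤ z.re} := by
      refine closure_minimal ?_ (isClosed_le continuous_const Complex.continuous_re)
      intro z hz; exact (Set.mem_preimage.mp hz).1.le
    constructor
    · intro z hz; exact (hgd z (Set.mem_preimage.mp hz).1.le).differentiableWithinAt
    · intro z hz; exact ((hgd z (hsub hz)).continuousAt).continuousWithinAt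
  -- growth bound
  have hgrow : ∀ z : ℂ, -1 ≤ z.re → z.re ≤ 2 →
      ‖g z‖ ≤ 2 * K₁ * C * Real.exp (B * Real.exp (1 * |z.im|)) := by
    intro z hz1 hz2
    have h4 : ((4:ℝ)) ^ (1/2 : ℝ) = 2 := by
      rw [show (4:ℝ) = 2 ^ (2:ℕ) by norm_num, ← Real.rpow_natCast 2 2,
        ← Real.rpow_mul (by norm_num : (0:ℝ) ≤ 2)]
      norm_num
    have hπ : ‖(Real.pi : ℂ) ^ (-z / 2)‖ ≤ 2 := by
      rw [hpinorm, hreneg]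
      calc Real.pi ^ (-z.re / 2) ≤ Real.pi ^ (1/2 : ℝ) :=
            Real.rpow_le_rpow_of_exponent_le hpi1 (by linarith)
        _ ≤ (4:ℝ) ^ (1/2 : ℝ) := Real.rpow_le_rpow Real.pi_pos.le Real.pi_le_four (by norm_num)
        _ = 2 := h4
    have hΓ : ‖Complex.Gamma (z / 2 + 1)‖ ≤ K₁ := by
      refine hK₁ _ ?_ ?_ <;>
        simp only [Complex.add_re, Complex.one_re] <;> rw [hrehalf] <;> linarith
    have hHz : ‖H z‖ ≤ C * Real.exp (B * Real.exp (1 * |z.im|)) := by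
      refine (hHbd z).trans ?_
      refine mul_le_mul_of_nonneg_left ?_ hC.le
      rw [Real.exp_le_exp, one_mul]
      refine le_trans ?_ (hB |z.im| (abs_nonneg _))
      refine Real.rpow_le_rpow (norm_nonneg _) ?_ hA.le
      refine (Complex.norm_le_abs_re_add_abs_im z).trans ?_
      have : |z.re| ≤ 2 := abs_le.mpr ⟨by linarith, hz2⟩
      linarith
    have hden : (1:ℝ) ≤ ‖(z + 5) ^ 2‖ := by
      rw [norm_pow]
      have : (1:ℝ) ≤ ‖z + 5‖ := by
        refine le_trans ?_ (Complex.re_le_norm (z + 5))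
        simp only [Complex.add_re]; norm_num; linarith
      nlinarith
    calc ‖g z‖ = ‖(Real.pi : ℂ) ^ (-z / 2) * Complex.Gamma (z / 2 + 1) * H z‖ / ‖(z + 5) ^ 2‖ := by
          rw [hgdef]; exact norm_div _ _
      _ ≤ ‖(Real.pi : ℂ) ^ (-z / 2) * Complex.Gamma (z / 2 + 1) * H z‖ / 1 :=
          div_le_div_of_nonneg_left (norm_nonneg _) one_pos hden
      _ = ‖(Real.pi : ℂ) ^ (-z / 2) * Complex.Gamma (z / 2 + 1) * H z‖ := div_one _
      _ ≤ 2 * K₁ * (C * Real.exp (B * Real.exp (1 * |z.im|))) := by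
          rw [norm_mul, norm_mul]
          exact mul_le_mul (mul_le_mul hπ hΓ (norm_nonneg _) (by norm_num)) hHz (norm_nonneg _)
            (by positivity)
      _ = 2 * K₁ * C * Real.exp (B * Real.exp (1 * |z.im|)) := by ring
  -- big O
  have hO : g =O[comap (_root_.abs ∘ Complex.im) atTop ⊓ 𝓟 (Complex.re ⁻¹' Ioo (-1 : ℝ) 2)]
      fun z => Real.exp (B * Real.exp (1 * |z.im|)) := by
    refine IsBigO.of_bound (2 * K₁ * C) ?_
    rw [Filter.eventually_inf_principal]
    refine Filter.Eventually.of_forall fun z hz => ?_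
    rw [Real.norm_eq_abs, _root_.abs_of_pos (Real.exp_pos _)]
    exact hgrow z (Set.mem_preimage.mp hz).1.le (Set.mem_preimage.mp hz).2.le
  have hc : (1:ℝ) < Real.pi / (2 - (-1)) := by
    rw [show (2 - (-1:ℝ)) = 3 by norm_num, lt_div_iff₀ (by norm_num)]
    linarith [Real.pi_gt_three]
  -- boundary at re = 2
  have hb2 : ∀ z : ℂ, z.re = 2 → ‖g z‖ ≤ 3 * M + 1 := by
    intro z hz
    have hkey : g z = (Real.pi : ℂ) ^ (-z / 2) * Complex.Gamma (z / 2 + 1) *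
        ((z - 1) * D z) / ((z + 5) ^ 2) := by
      simp only [hgdef]
      rw [hHeq z (by rw [hz]; norm_num)]
    have hπ : ‖(Real.pi : ℂ) ^ (-z / 2)‖ ≤ 1 := by
      rw [hpinorm, hreneg]
      exact Real.rpow_le_one_of_one_le_of_nonpos hpi1 (by rw [hz]; norm_num)
    have hΓ : ‖Complex.Gamma (z / 2 + 1)‖ ≤ 1 := by
      have hre : (z / 2 + 1).re = 2 := by
        simp only [Complex.add_re, Complex.one_re]; rw [hrehalf, hz]; norm_num
      refine le_trans (aux_norm_Gamma (by rw [hre]; norm_num)) ?_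
      rw [hre, show (2:ℝ) = (1:ℝ) + 1 by norm_num, Real.Gamma_add_one (by norm_num),
        Real.Gamma_one]
      norm_num
    have hd : ‖D z‖ ≤ M := hDb z (by rw [hz])
    set x := ‖z + 5‖ with hx
    have hx6 : (6:ℝ) ≤ x := by
      refine le_trans ?_ (Complex.re_le_norm (z + 5))
      simp only [Complex.add_re]; rw [hz]; norm_num
    have hz1n : ‖z - 1‖ ≤ 2 * x := by
      have h1 := norm_add_le (z + 5) (-6 : ℂ)
      rw [show (z + 5) + (-6 : ℂ) = z - 1 by ring, show ‖(-6:ℂ)‖ = 6 by simp] at h1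
      linarith
    rw [hkey]
    calc ‖(Real.pi : ℂ) ^ (-z / 2) * Complex.Gamma (z / 2 + 1) * ((z - 1) * D z) / ((z + 5) ^ 2)‖
        = ‖(Real.pi : ℂ) ^ (-z / 2)‖ * ‖Complex.Gamma (z / 2 + 1)‖ * (‖z - 1‖ * ‖D z‖) / x ^ 2 := by
          rw [norm_div, norm_mul, norm_mul, norm_mul, norm_pow]
      _ ≤ 1 * 1 * (2 * x * M) / x ^ 2 := by
          refine div_le_div_of_nonneg_right ?_ (by nlinarith)
          refine mul_le_mul (mul_le_mul hπ hΓ (norm_nonneg _) (by norm_num)) ?_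
            (by positivity) (by norm_num)
          exact mul_le_mul hz1n hd (norm_nonneg _) (by nlinarith)
      _ ≤ 3 * M + 1 := by
          rw [div_le_iff₀ (by nlinarith)]
          nlinarith [mul_nonneg hM0 (by nlinarith : (0:ℝ) ≤ 3 * x ^ 2 - 2 * x)]
  -- boundary at re = -1
  have hbm1 : ∀ z : ℂ, z.re = -1 → ‖g z‖ ≤ 3 * M + 1 := by
    intro z hz
    have him : z.im ≠ 0 ∨ z = -1 := by
      rcases eq_or_ne z.im 0 with h | h
      · exact Or.inr (Complex.ext (by rw [hz]; norm_num) (by rw [h]; norm_num))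
      · exact Or.inl h
    have hzne : z ≠ 0 := fun h => by rw [h] at hz; norm_num at hz
    have hz1 : z - 1 ≠ 0 := fun h => by
      have := congrArg Complex.re h
      simp only [Complex.sub_re, Complex.one_re, Complex.zero_re] at this
      linarith
    have hznne : -z ≠ 0 := neg_ne_zero.mpr hzne
    have hEqz := hEq z him
    rw [div_eq_div_iff hz1 hznne] at hEqz
    have hre1z : (1 - z).re = 2 := by simp only [Complex.sub_re, Complex.one_re]; rw [hz]; norm_num
    have hH1z : H (1 - z) = (-z) * D (1 - z) := by
      rw [hHeq (1 - z) (by rw [hre1z]; norm_num)]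
      ring_nf
    have hXH : (Real.pi : ℂ) ^ (-z / 2) * Complex.Gamma (z / 2) * H z =
        (Real.pi : ℂ) ^ (-(1 - z) / 2) * Complex.Gamma ((1 - z) / 2) * D (1 - z) * (z - 1) := by
      refine mul_right_cancel₀ hznne ?_
      rw [hEqz, hH1z]; ring
    have hG2 : Complex.Gamma (z / 2 + 1) = (z / 2) * Complex.Gamma (z / 2) := by
      refine Complex.Gamma_add_one _ fun h => ?_
      exact hzne (by rw [show z = 2 * (z / 2) by ring, h, mul_zero])
    have hgkey : g z = (Real.pi : ℂ) ^ (-(1 - z) / 2) * Complex.Gamma ((1 - z) / 2) *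
        D (1 - z) * ((z - 1) * z / 2) / ((z + 5) ^ 2) := by
      simp only [hgdef]
      rw [hG2]
      rw [show (Real.pi : ℂ) ^ (-z / 2) * (z / 2 * Complex.Gamma (z / 2)) * H z =
        ((Real.pi : ℂ) ^ (-z / 2) * Complex.Gamma (z / 2) * H z) * (z / 2) by ring, hXH]
      ring_nf
    have hπ : ‖(Real.pi : ℂ) ^ (-(1 - z) / 2)‖ ≤ 1 := by
      rw [hpinorm, hreneg]
      refine Real.rpow_le_one_of_one_le_of_nonpos hpi1 ?_
      rw [hre1z]; norm_num
    have hΓ : ‖Complex.Gamma ((1 - z) / 2)‖ ≤ 1 := by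
      have hre : ((1 - z) / 2).re = 1 := by rw [hrehalf, hre1z]; norm_num
      refine le_trans (aux_norm_Gamma (by rw [hre]; norm_num)) ?_
      rw [hre, Real.Gamma_one]
    have hd : ‖D (1 - z)‖ ≤ M := hDb _ (by rw [hre1z])
    set x := ‖z + 5‖ with hx
    have hx4 : (4:ℝ) ≤ x := by
      refine le_trans ?_ (Complex.re_le_norm (z + 5))
      simp only [Complex.add_re]; rw [hz]; norm_num
    have hzn : ‖z‖ ≤ x + 5 := by
      have h1 := norm_add_le (z + 5) (-5 : ℂ)
      rw [show (z + 5) + (-5 : ℂ) = z by ring, show ‖(-5:ℂ)‖ = 5 by simp] at h1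
      linarith
    have hz1n : ‖z - 1‖ ≤ x + 6 := by
      have h1 := norm_add_le (z + 5) (-6 : ℂ)
      rw [show (z + 5) + (-6 : ℂ) = z - 1 by ring, show ‖(-6:ℂ)‖ = 6 by simp] at h1
      linarith
    rw [hgkey]
    have hnorm2 : ‖(z - 1) * z / 2‖ = ‖z - 1‖ * ‖z‖ / 2 := by
      rw [norm_div, norm_mul, show ‖(2:ℂ)‖ = 2 by simp]
    calc ‖(Real.pi : ℂ) ^ (-(1 - z) / 2) * Complex.Gamma ((1 - z) / 2) *
          D (1 - z) * ((z - 1) * z / 2) / ((z + 5) ^ 2)‖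
        = ‖(Real.pi : ℂ) ^ (-(1 - z) / 2)‖ * ‖Complex.Gamma ((1 - z) / 2)‖ * ‖D (1 - z)‖ *
          (‖z - 1‖ * ‖z‖ / 2) / x ^ 2 := by
          rw [norm_div, norm_mul, norm_mul, norm_mul, norm_pow, hnorm2]
      _ ≤ 1 * 1 * M * ((x + 6) * (x + 5) / 2) / x ^ 2 := by
          refine div_le_div_of_nonneg_right ?_ (by nlinarith)
          refine mul_le_mul (mul_le_mul (mul_le_mul hπ hΓ (norm_nonneg _) (by norm_num)) hd
            (norm_nonneg _) (by norm_num)) ?_ (by positivity) (by nlinarith)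
          refine div_le_div_of_nonneg_right ?_ (by norm_num) |>.trans (le_refl _)
          exact mul_le_mul hz1n hzn (norm_nonneg _) (by nlinarith)
      _ ≤ 3 * M + 1 := by
          rw [div_le_iff₀ (by nlinarith)]
          have h30 : (0:ℝ) ≤ 5 * x ^ 2 - 11 * x - 30 := by nlinarith [hx4, sq_nonneg (x - 4)]
          nlinarith [mul_nonneg hM0 h30, sq_nonneg x]
  -- apply PL and conclude
  intro s hs1 hs2 him
  have hgs : ‖g s‖ ≤ 3 * M + 1 :=
    PhragmenLindelof.vertical_strip hfd ⟨1, hc, B, hO⟩ hbm1 hb2 hs1 hs2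
  have hsim : s.im ≠ 0 := fun h => by rw [h] at him; norm_num at him
  have hsne : s ≠ 0 := fun h => by rw [h] at hsim; simp at hsim
  have hs1' : s - 1 ≠ 0 := fun h => by
    have := congrArg Complex.im h
    simp only [Complex.sub_im, Complex.one_im, Complex.zero_im, sub_zero] at this
    exact hsim this
  have h5 : s + 5 ≠ 0 := fun h => by
    have := congrArg Complex.im h
    simp only [Complex.add_im, Complex.zero_im] at this
    norm_num at this
    exact hsim this
  have hG2 : Complex.Gamma (s / 2 + 1) = (s / 2) * Complex.Gamma (s / 2) := by
    refine Complex.Gamma_add_one _ fun h => ?_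
    exact hsne (by rw [show s = 2 * (s / 2) by ring, h, mul_zero])
  have hGg : (Real.pi : ℂ) ^ (-s / 2) * Complex.Gamma (s / 2) * H s / (s - 1) =
      g s * (2 * (s + 5) ^ 2 / (s * (s - 1))) := by
    simp only [hgdef]
    rw [hG2]
    field_simp
  rw [hGg, norm_mul]
  have hfac : ‖2 * (s + 5) ^ 2 / (s * (s - 1))‖ ≤ 144 := by
    set av := ‖s‖ with hav
    set bv := ‖s - 1‖ with hbv
    set cv := ‖s + 5‖ with hcv
    have ha1 : (1:ℝ) ≤ av := le_trans him (Complex.abs_im_le_norm s)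
    have hb1 : (1:ℝ) ≤ bv := by
      refine le_trans ?_ (Complex.abs_im_le_norm (s - 1))
      simp only [Complex.sub_im, Complex.one_im, sub_zero]
      exact him
    have hca : cv ≤ av + 5 := by
      have h1 : ‖s + 5‖ ≤ ‖s‖ + ‖(5 : ℂ)‖ := norm_add_le _ _
      rw [show ‖(5:ℂ)‖ = 5 by simp] at h1
      exact h1
    have hab : av ≤ bv + 1 := by
      have h1 := norm_add_le (s - 1) (1 : ℂ)
      rw [show (s - 1) + (1 : ℂ) = s by ring, show ‖(1:ℂ)‖ = 1 by simp] at h1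
      exact h1
    have heq : ‖2 * (s + 5) ^ 2 / (s * (s - 1))‖ = 2 * cv ^ 2 / (av * bv) := by
      rw [norm_div, norm_mul, norm_mul, norm_pow, show ‖(2:ℂ)‖ = 2 by simp]
    rw [heq, div_le_iff₀ (by nlinarith)]
    nlinarith [norm_nonneg (s + 5), sq_nonneg (av - bv)]
  calc ‖g s‖ * ‖2 * (s + 5) ^ 2 / (s * (s - 1))‖ ≤ (3 * M + 1) * 144 :=
        mul_le_mul hgs hfac (norm_nonneg _) (by nlinarith)
    _ = 144 * (3 * M + 1) := by ring


/-- Under the hypotheses of Hamburger's theorem (self-dual case), the completed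
Dirichlet series `π^{-s/2} Γ(s/2) h(s) = π^{-s/2} Γ(s/2) H(s)/(s−1)` is bounded
in every vertical strip away from the real axis. -/
theorem hamburger_hypotheses_imply_bv (a : ℕ → ℂ)
    (ha : ∀ σ : ℝ, 1 < σ → Summable fun n : ℕ => ‖a (n + 1)‖ * ((n : ℝ) + 1) ^ (-σ))
    (H : ℂ → ℂ) (hH : Differentiable ℂ H)
    (hHeq : ∀ s : ℂ, 1 < s.re →
      H s = (s - 1) * ∑' n : ℕ, a (n + 1) * ((n : ℂ) + 1) ^ (-s))
    (A C : ℝ) (hA : 0 < A) (hC : 0 < C)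
    (hHbd : ∀ s : ℂ, ‖H s‖ ≤ C * Real.exp (‖s‖ ^ A))
    (hFE : ∀ s : ℂ, 0 < s.re → s.re < 1 →
      (Real.pi : ℂ) ^ (-s / 2) * Complex.Gamma (s / 2) * H s / (s - 1) =
        (Real.pi : ℂ) ^ (-(1 - s) / 2) * Complex.Gamma ((1 - s) / 2) * H (1 - s) / (-s)) :
    ∀ a' b' : ℝ, a' ≤ b' → ∃ C' > 0, ∀ s : ℂ,
      a' ≤ s.re → s.re ≤ b' → 1 ≤ |s.im| →
        ‖(Real.pi : ℂ) ^ (-s / 2) * Complex.Gamma (s / 2) * H s / (s - 1)‖ ≤ C' := by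
  intro a' b' hab'
  have hpinorm : ∀ w : ℂ, ‖(Real.pi : ℂ) ^ w‖ = Real.pi ^ w.re := fun w => by
    rw [Complex.norm_cpow_eq_rpow_re_of_pos Real.pi_pos]
  set D : ℂ → ℂ := fun s => ∑' n : ℕ, a (n + 1) * ((n : ℂ) + 1) ^ (-s) with hDdef
  set M : ℝ := ∑' n : ℕ, ‖a (n + 1)‖ * ((n : ℝ) + 1) ^ (-(2:ℝ)) with hMdef
  have hM0 : 0 ≤ M := tsum_nonneg fun n => by positivity
  have hDb : ∀ s : ℂ, 2 ≤ s.re → ‖D s‖ ≤ M := aux_dirichlet a (ha 2 one_lt_two)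
  have hHeq' : ∀ s : ℂ, 1 < s.re → H s = (s - 1) * D s := hHeq
  set b₂ : ℝ := max 2 (max b' (1 - a')) with hb₂def
  obtain ⟨K₀, hK₀pos, hK₀⟩ := aux_Gamma_strip 1 (b₂ / 2) one_pos
  have hright := aux_right H D M K₀ hM0 hK₀pos b₂ hHeq' hDb hpinorm hK₀
  have hEq := aux_fe H hH hFE
  have hmid := aux_mid H D hH M hM0 A C hA hC hHbd hHeq' hDb hpinorm hEq
  refine ⟨max (K₀ * M) (144 * (3 * M + 1)) + 1, by positivity, fun s h1 h2 h3 => ?_⟩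
  have him : s.im ≠ 0 := fun h => by rw [h] at h3; norm_num at h3
  have hmain : ‖(Real.pi : ℂ) ^ (-s / 2) * Complex.Gamma (s / 2) * H s / (s - 1)‖ ≤
      max (K₀ * M) (144 * (3 * M + 1)) := by
    rcases le_total s.re (-1) with hre | hre
    · have hGs : (Real.pi : ℂ) ^ (-s / 2) * Complex.Gamma (s / 2) * H s / (s - 1) =
          (Real.pi : ℂ) ^ (-(1 - s) / 2) * Complex.Gamma ((1 - s) / 2) * H (1 - s) /
            ((1 - s) - 1) := by
        rw [hEq s (Or.inl him), show (1:ℂ) - s - 1 = -s by ring]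
      rw [hGs]
      refine le_trans (hright (1 - s) ?_ ?_) (le_max_left _ _)
      · simp only [Complex.sub_re, Complex.one_re]; linarith
      · simp only [Complex.sub_re, Complex.one_re]
        have h4 : 1 - s.re ≤ 1 - a' := by linarith
        exact h4.trans ((le_max_right _ _).trans (le_max_right _ _))
    · rcases le_total s.re 2 with hre2 | hre2
      · exact le_trans (hmid s hre hre2 h3) (le_max_right _ _)
      · refine le_trans (hright s hre2 (h2.trans ?_)) (le_max_left _ _)
        exact (le_max_left _ _).trans (le_max_right _ _)
  exact hmain.trans (by linarith)
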